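/- For a logistic model with h(x) = θᵀx, the Fisher-Rao distance between inputs x and x' satisfies d ≤ (1/2)|θᵀ(x'−x)| ≤ (ε/2)·‖θ‖₂ whenever ‖x'−x‖₂ ≤ ε. -/

import Mathlib

open Real
open scoped RealInnerProductSpace

lemma arctan_exp_half_lipschitz (a b : ℝ) :
    |Real.arctan (Real.exp (a / 2)) - Real.arctan (Real.exp (b / 2))| ≤ |a - b| / 4 := by
  set f : ℝ → ℝ := fun t => Real.arctan (Real.exp (t / 2)) with hf
  set f' : ℝ → ℝ := fun t => Real.exp (t / 2) / 2 / (1 + Real.exp (t / 2) ^ 2) with hf'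
  have hderiv : ∀ t : ℝ, HasDerivAt f (f' t) t := by
    intro t
    have h1 : HasDerivAt (fun t : ℝ => t / 2) (1 / 2) t := (hasDerivAt_id t).div_const 2
    have h2 := (Real.hasDerivAt_exp (t / 2)).comp t h1
    have h3 := (Real.hasDerivAt_arctan (Real.exp (t / 2))).comp t h2
    refine h3.congr_deriv ?_
    simp [hf']
    ring
  have hbound : ∀ t : ℝ, ‖f' t‖ ≤ 1 / 4 := by
    intro t
    have he : (0:ℝ) < Real.exp (t / 2) := Real.exp_pos _
    have hkey : 2 * Real.exp (t / 2) ≤ 1 + Real.exp (t / 2) ^ 2 := by nlinarith [sq_nonneg (Real.exp (t / 2) - 1)]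
    have hpos : (0:ℝ) < 1 + Real.exp (t / 2) ^ 2 := by positivity
    have : f' t ≤ 1 / 4 := by
      show Real.exp (t / 2) / 2 / (1 + Real.exp (t / 2) ^ 2) ≤ 1 / 4
      rw [div_div, div_le_iff₀ (by positivity)]
      nlinarith
    have h0 : 0 ≤ f' t := by show (0:ℝ) ≤ Real.exp (t / 2) / 2 / (1 + Real.exp (t / 2) ^ 2); positivity
    rw [Real.norm_eq_abs, abs_of_nonneg h0]
    exact this
  have := Convex.norm_image_sub_le_of_norm_hasDerivWithin_le
    (f := f) (f' := f') (fun t _ => (hderiv t).hasDerivWithinAt)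
    (fun t _ => hbound t) convex_univ (Set.mem_univ b) (Set.mem_univ a)
  simpa [hf, Real.norm_eq_abs, div_eq_inv_mul, mul_comm] using this

/-- For the logistic model `h(x) = θᵀx`, the Fisher-Rao distance between inputs
`x` and `x'` satisfies `d ≤ |θᵀ(x'-x)|/2 ≤ ε ‖θ‖/2` whenever `‖x' - x‖ ≤ ε`. -/
theorem fisher_rao_logistic_le {n : ℕ} (θ x x' : EuclideanSpace ℝ (Fin n)) (ε : ℝ)
    (h : ‖x' - x‖ ≤ ε) :
    2 * |Real.arctan (Real.exp (⟪θ, x'⟫ / 2)) - Real.arctan (Real.exp (⟪θ, x⟫ / 2))|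
        ≤ |⟪θ, x' - x⟫| / 2 ∧
    |⟪θ, x' - x⟫| / 2 ≤ ε * ‖θ‖ / 2 := by
  have hinner : ⟪θ, x' - x⟫ = ⟪θ, x'⟫ - ⟪θ, x⟫ := inner_sub_right θ x' x
  constructor
  · have := arctan_exp_half_lipschitz ⟪θ, x'⟫ ⟪θ, x⟫
    rw [hinner]
    linarith
  · have hcs : |⟪θ, x' - x⟫| ≤ ‖θ‖ * ‖x' - x‖ := abs_real_inner_le_norm θ (x' - x)
    have hθ : (0:ℝ) ≤ ‖θ‖ := norm_nonneg _
    nlinarith [norm_nonneg (x' - x)]
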